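/- arXiv:2507.01499 — 3 statements merged into one kernel-verified Lean document; each statement's English description precedes it below -/
import Mathlib

section
/- Let q, a, c be complex numbers with |q| < 1, q ≠ 0, and suppose c, a/c are not of the form q^n for any integer n and are nonzero, and c ≠ aq, a ≠ q. Then the basic hypergeometric series ₂φ₁(a, q²; c; q, λ) evaluated at λ = (q² - c)/((q - a)q) equals (q - a)(q - c)/((1 - q)(c - aq)), provided the series converges at λ (e.g. |λ| < 1). -/
/-- q-Pochhammer symbol $(a;q)_n$. -/
noncomputable def qPoch (a q : ℂ) (n : ℕ) : ℂ := ∏ j ∈ Finset.range n, (1 - a * q ^ j)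

/-- Basic hypergeometric series ₂φ₁(a, b; c; q, x). -/
noncomputable def phi21 (a b c q x : ℂ) : ℂ :=
  ∑' n : ℕ, qPoch a q n * qPoch b q n / (qPoch q q n * qPoch c q n) * x ^ n

lemma qPoch_zero (a q : ℂ) : qPoch a q 0 = 1 := by simp [qPoch]

lemma qPoch_succ (a q : ℂ) (n : ℕ) :
    qPoch a q (n + 1) = qPoch a q n * (1 - a * q ^ n) := Finset.prod_range_succ _ _

lemma qPoch_q_succ (q : ℂ) (n : ℕ) :
    qPoch q q (n + 1) = qPoch (q ^ 2) q n * (1 - q) := by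
  rw [qPoch, Finset.prod_range_succ']
  congr 1
  · exact Finset.prod_congr rfl (fun j _ => by ring)
  · ring

lemma frac1 (Pa Pq Pc L w v z : ℂ) (hPq : Pq ≠ 0) (hz : z ≠ 0) (hv : v ≠ 0) (hPc : Pc ≠ 0) :
    Pa * (Pq * w / v) / (Pq * Pc) * L = Pa * (w * z) * L / (v * (Pc * z)) := by
  field_simp

lemma frac2 (Pa L R Q v d w z : ℂ) (hv : v ≠ 0) (hd : d ≠ 0) (hw : w ≠ 0) (hz : z ≠ 0)
    (hQ : Q ≠ 0) :
    Pa * L * R / (v * d * Q) = Pa * (w * z) * L / (v * Q) * (R * v / (v * d * (z * w))) := by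
  field_simp

/-- The telescoping antiderivative. -/
noncomputable def uu (q a c lam : ℂ) (n : ℕ) : ℂ :=
  qPoch a q n * lam ^ n * ((q - a) * (q - c * (1 + q) * q ^ n + c ^ 2 * (q ^ n) ^ 2)) /
    ((1 - q) * (c - a * q) * qPoch c q (n + 1))

theorem stmt_0 (q a c : ℂ) (hq : ‖q‖ < 1) (hq0 : q ≠ 0)
    (hc : ∀ n : ℤ, c ≠ q ^ n) (hac : ∀ n : ℤ, a / c ≠ q ^ n)
    (hc0 : c ≠ 0) (hac0 : a / c ≠ 0)
    (hcaq : c ≠ a * q) (haq : a ≠ q)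
    (lam : ℂ) (hlam : lam = (q ^ 2 - c) / ((q - a) * q))
    (hconv : Summable (fun n : ℕ =>
      qPoch a q n * qPoch (q ^ 2) q n / (qPoch q q n * qPoch c q n) * lam ^ n)) :
    phi21 a (q ^ 2) c q lam = (q - a) * (q - c) / ((1 - q) * (c - a * q)) := by
  have hqpow : ∀ k : ℕ, (1 : ℂ) - q * q ^ k ≠ 0 := by
    intro k h
    have hlt : ‖q * q ^ k‖ < 1 := by
      rw [norm_mul, norm_pow]
      calc ‖q‖ * ‖q‖ ^ k ≤ ‖q‖ * 1 := by
            apply mul_le_mul_of_nonneg_left _ (norm_nonneg q)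
            exact pow_le_one₀ (norm_nonneg q) hq.le
        _ < 1 := by simpa using hq
    have h1 : (1 : ℂ) = q * q ^ k := by linear_combination h
    rw [← h1, norm_one] at hlt
    exact lt_irrefl 1 hlt
  have h1q : (1 : ℂ) - q ≠ 0 := by simpa using hqpow 0
  have hcpow : ∀ k : ℕ, (1 : ℂ) - c * q ^ k ≠ 0 := by
    intro k h
    apply hc (-(k : ℤ))
    have hck : c * q ^ k = 1 := by linear_combination -h
    rw [zpow_neg, zpow_natCast]
    exact eq_inv_of_mul_eq_one_left hck
  have hq_ne : ∀ n, qPoch q q n ≠ 0 := fun n =>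
    Finset.prod_ne_zero_iff.mpr (fun j _ => hqpow j)
  have hc_ne : ∀ n, qPoch c q n ≠ 0 := fun n =>
    Finset.prod_ne_zero_iff.mpr (fun j _ => hcpow j)
  have hqa : q - a ≠ 0 := sub_ne_zero.mpr (Ne.symm haq)
  have hD : c - a * q ≠ 0 := sub_ne_zero.mpr hcaq
  have hc1 : (1 : ℂ) - c ≠ 0 := by
    have := hc 0
    simp only [zpow_zero] at this
    exact sub_ne_zero.mpr (Ne.symm this)
  have hlam2 : lam * ((q - a) * q) = q ^ 2 - c := by
    rw [hlam]
    field_simp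
  set t : ℕ → ℂ := fun n =>
      qPoch a q n * qPoch (q ^ 2) q n / (qPoch q q n * qPoch c q n) * lam ^ n with hT
  have hq2 : ∀ n, qPoch (q ^ 2) q n = qPoch q q n * (1 - q * q ^ n) / (1 - q) := by
    intro n
    rw [eq_div_iff h1q]
    have h1 := qPoch_q_succ q n
    have h2 := qPoch_succ q q n
    linear_combination h2 - h1
  -- t n as a simple fraction
  have e1 : ∀ n, t n = qPoch a q n * ((1 - q * q ^ n) * (1 - c * q ^ n)) * lam ^ n /
      ((1 - q) * qPoch c q (n + 1)) := by
    intro n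
    simp only [hT]
    rw [hq2 n, qPoch_succ c q n]
    exact frac1 _ _ _ _ _ _ _ (hq_ne n) (hcpow n) h1q (hc_ne n)
  -- telescoping identity
  have htele : ∀ n, t n = uu q a c lam n - uu q a c lam (n + 1) := by
    intro n
    have hQ : qPoch c q (n + 1) ≠ 0 := hc_ne (n + 1)
    have hcqy : (1 : ℂ) - c * (q ^ n * q) ≠ 0 := by
      have := hcpow (n + 1); rwa [pow_succ] at this
    have hD1 : (1 - q) * qPoch c q (n + 1) ≠ 0 := mul_ne_zero h1q hQ
    have hD2 : (1 - q) * (c - a * q) * qPoch c q (n + 1) ≠ 0 :=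
      mul_ne_zero (mul_ne_zero h1q hD) hQ
    have hD3 : (1 - q) * (c - a * q) * (qPoch c q (n + 1) * (1 - c * (q ^ n * q))) ≠ 0 :=
      mul_ne_zero (mul_ne_zero h1q hD) (mul_ne_zero hQ hcqy)
    rw [e1 n, uu, uu, qPoch_succ a q n, qPoch_succ c q (n + 1)]
    simp only [pow_succ]
    rw [div_sub_div _ _ hD2 hD3, div_eq_div_iff hD1 (mul_ne_zero hD2 hD3)]
    linear_combination (qPoch a q n * (1 - a * q ^ n) * lam ^ n *
      (1 - c * (1 + q) * q ^ n + c ^ 2 * q * (q ^ n) ^ 2) * (1 - q) ^ 2 * (c - a * q) *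
      (qPoch c q (n + 1)) ^ 2) * hlam2
  -- u tends to zero
  have hqn : Filter.Tendsto (fun n : ℕ => q ^ n) Filter.atTop (nhds 0) :=
    tendsto_pow_atTop_nhds_zero_of_norm_lt_one hq
  set F : ℂ → ℂ := fun x =>
      (q - a) * (q - c * (1 + q) * x + c ^ 2 * x ^ 2) * (1 - q) /
        ((1 - q) * (c - a * q) * ((1 - c * x) * (1 - q * x))) with hF
  have hug : ∀ n, uu q a c lam n = t n * F (q ^ n) := by
    intro n
    have hQ : qPoch c q (n + 1) ≠ 0 := hc_ne (n + 1)
    rw [e1 n, uu, hF]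
    exact frac2 _ _ _ _ _ _ _ _ h1q hD (hqpow n) (hcpow n) hQ
  have hFc : ContinuousAt F 0 := by
    apply ContinuousAt.div
    · fun_prop
    · fun_prop
    · simp only [mul_zero, sub_zero, mul_one]
      exact mul_ne_zero h1q hD
  have ht0 : Filter.Tendsto t Filter.atTop (nhds 0) := hconv.tendsto_atTop_zero
  have hu0 : Filter.Tendsto (fun n => uu q a c lam n) Filter.atTop (nhds 0) := by
    have hFt : Filter.Tendsto (fun n : ℕ => F (q ^ n)) Filter.atTop (nhds (F 0)) :=
      hFc.tendsto.comp hqn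
    have h := ht0.mul hFt
    rw [zero_mul] at h
    exact h.congr (fun n => (hug n).symm)
  have hpart : ∀ n, ∑ i ∈ Finset.range n, t i = uu q a c lam 0 - uu q a c lam n := by
    intro n
    rw [Finset.sum_congr rfl (fun i _ => htele i)]
    exact Finset.sum_range_sub' _ _
  have hlim : Filter.Tendsto (fun n => ∑ i ∈ Finset.range n, t i) Filter.atTop
      (nhds (uu q a c lam 0)) := by
    have h2 : Filter.Tendsto (fun n => uu q a c lam 0 - uu q a c lam n) Filter.atTop
        (nhds (uu q a c lam 0 - 0)) := tendsto_const_nhds.sub hu0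
    rw [sub_zero] at h2
    exact h2.congr (fun n => (hpart n).symm)
  have hsum : ∑' n, t n = uu q a c lam 0 :=
    tendsto_nhds_unique hconv.hasSum.tendsto_sum_nat hlim
  have hphi : phi21 a (q ^ 2) c q lam = ∑' n, t n := rfl
  rw [hphi, hsum, uu]
  have hden0 : (1 - q) * (c - a * q) * qPoch c q (0 + 1) ≠ 0 :=
    mul_ne_zero (mul_ne_zero h1q hD) (hc_ne 1)
  rw [div_eq_div_iff hden0 (mul_ne_zero h1q hD)]
  rw [qPoch_succ c q 0]
  simp only [qPoch_zero, pow_zero]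
  ring
end

section
/- Gosper's strange evaluation: for real α > 0 and β > 0, the hypergeometric series ₂F₁(1 - α, β; β + 2; β/(α + β)) equals (β + 1) · (α/(α + β))^α. -/
/-- Rising factorial (Pochhammer symbol) $(a)_n$. -/
noncomputable def rising (a : ℝ) (n : ℕ) : ℝ := ∏ j ∈ Finset.range n, (a + j)

/-- Gauss hypergeometric series ₂F₁(a, b; c; x). -/
noncomputable def F21 (a b c x : ℝ) : ℝ :=
  ∑' n : ℕ, rising a n * rising b n / (rising 1 n * rising c n) * x ^ n

namespace GosperAux

open Finset

lemma rising_zero (a : ℝ) : rising a 0 = 1 := by simp [rising]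

lemma rising_succ (a : ℝ) (n : ℕ) : rising a (n+1) = rising a n * (a + n) := by
  simp [rising, Finset.prod_range_succ]

lemma rising_one_eq (n : ℕ) : rising 1 n = n.factorial := by
  rw [rising, ← Finset.prod_range_add_one_eq_factorial n]
  push_cast
  exact Finset.prod_congr rfl (fun j _ => by ring)

lemma rising_pos {a : ℝ} (ha : 0 < a) (n : ℕ) : 0 < rising a n := by
  apply Finset.prod_pos
  intro j _
  positivity

lemma rising_ratio {β : ℝ} (hβ : 0 < β) (n : ℕ) :
    rising β n * ((β + n) * (β + n + 1)) = β * (β + 1) * rising (β + 2) n := by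
  induction n with
  | zero => simp [rising_zero]
  | succ n ih =>
    rw [rising_succ, rising_succ]
    push_cast
    nlinarith [ih]

/-- binomial coefficient sequence: `co r n = rising (-r) n / n!`, the series
coefficients of `(1-y)^r`. -/
noncomputable def co (r : ℝ) (n : ℕ) : ℝ := rising (-r) n / n.factorial

lemma co_zero (r : ℝ) : co r 0 = 1 := by simp [co, rising_zero]

lemma co_succ_mul (r : ℝ) (n : ℕ) : co r (n+1) * (n+1) = co r n * ((n : ℝ) - r) := by
  have h : (n.factorial : ℝ) ≠ 0 := Nat.cast_ne_zero.mpr n.factorial_ne_zero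
  rw [co, co, rising_succ, Nat.factorial_succ]
  push_cast
  field_simp
  ring

lemma abs_co_eq (r : ℝ) (n : ℕ) :
    |co r n| = ∏ j ∈ range n, (|(-r : ℝ) + j| / (j + 1)) := by
  have hfac : (n.factorial : ℝ) = ∏ j ∈ range n, ((j : ℝ) + 1) := by
    rw [← Finset.prod_range_add_one_eq_factorial n]
    push_cast
    rfl
  rw [co, rising, hfac, ← Finset.prod_div_distrib, Finset.abs_prod]
  exact Finset.prod_congr rfl (fun j _ => by
    rw [abs_div, abs_of_pos (show (0:ℝ) < (j:ℝ) + 1 by positivity)])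

lemma co_bound (r : ℝ) (hr : -1 ≤ r) :
    ∃ C : ℝ, 1 ≤ C ∧ ∀ n, |co r n| ≤ C := by
  set N := ⌈r⌉₊ with hN
  set g : ℕ → ℝ := fun j => max (|(-r : ℝ) + j| / (j + 1)) 1 with hg
  refine ⟨∏ j ∈ range N, g j, ?_, ?_⟩
  · calc (1:ℝ) = ∏ _j ∈ range N, (1:ℝ) := by simp
      _ ≤ ∏ j ∈ range N, g j :=
        Finset.prod_le_prod (fun j _ => zero_le_one) (fun j _ => le_max_right _ _)
  intro n
  have h1 : ∀ j, 1 ≤ g j := fun j => le_max_right _ _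
  have hgN : ∀ j, N ≤ j → g j = 1 := by
    intro j hj
    have hrj : r ≤ j := le_trans (Nat.le_ceil r) (by exact_mod_cast hj)
    have habs : |(-r : ℝ) + j| = (j : ℝ) - r := by
      rw [abs_of_nonneg (by linarith)]; ring
    have : |(-r : ℝ) + j| / (j + 1) ≤ 1 := by
      rw [habs, div_le_one (by positivity)]
      linarith
    simp [hg, max_eq_right this]
  calc |co r n| = ∏ j ∈ range n, (|(-r : ℝ) + j| / (j + 1)) := abs_co_eq r n
    _ ≤ ∏ j ∈ range n, g j := by
        apply Finset.prod_le_prod (fun j _ => by positivity) (fun j _ => le_max_left _ _)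
    _ ≤ ∏ j ∈ range (max n N), g j := by
        rw [← Finset.prod_range_mul_prod_Ico g (le_max_left n N)]
        have h0 : (0:ℝ) ≤ ∏ j ∈ range n, g j :=
          Finset.prod_nonneg (fun j _ => le_trans zero_le_one (h1 j))
        have h2 : (1:ℝ) ≤ ∏ j ∈ Finset.Ico n (max n N), g j := by
          calc (1:ℝ) = ∏ _j ∈ Finset.Ico n (max n N), (1:ℝ) := by simp
            _ ≤ _ := Finset.prod_le_prod (fun j _ => zero_le_one) (fun j _ => h1 j)
        nlinarith
    _ = ∏ j ∈ range N, g j := by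
        refine (Finset.prod_subset (Finset.range_subset_range.mpr (le_max_right n N)) ?_).symm
        intro j hj hjN
        exact hgN j (by simpa using hjN)

lemma summable_aux (C ρ : ℝ) (hρ0 : 0 ≤ ρ) (hρ1 : ρ < 1) (k : ℕ) :
    Summable (fun n : ℕ => C * ((n : ℝ) ^ k * ρ ^ n)) := by
  apply Summable.mul_left
  have := summable_pow_mul_geometric_of_norm_lt_one (R := ℝ) k (r := ρ)
    (by rwa [Real.norm_eq_abs, abs_of_nonneg hρ0])
  simpa using this

lemma summable_co_pow {r C ρ : ℝ} (hC : ∀ n, |co r n| ≤ C)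
    (hρ0 : 0 ≤ ρ) (hρ1 : ρ < 1) :
    Summable (fun n : ℕ => |co r n| * ρ ^ n) := by
  have hs : Summable (fun n : ℕ => C * ((n : ℝ) ^ 0 * ρ ^ n)) := summable_aux C ρ hρ0 hρ1 0
  refine Summable.of_nonneg_of_le (fun n => by positivity) (fun n => ?_) hs
  have h2 : (0:ℝ) ≤ ρ ^ n := by positivity
  simpa using mul_le_mul_of_nonneg_right (hC n) h2

lemma summable_deriv_bound (C ρ : ℝ) (hρ0 : 0 < ρ) (hρ1 : ρ < 1) (hC : 0 ≤ C) :
    Summable (fun n : ℕ => C * ((n : ℝ) * ρ ^ (n - 1))) := by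
  have hs : Summable (fun n : ℕ => (C / ρ) * ((n : ℝ) ^ 1 * ρ ^ n)) :=
    summable_aux (C / ρ) ρ hρ0.le hρ1 1
  refine Summable.of_nonneg_of_le (fun n => by positivity) (fun n => ?_) hs
  cases n with
  | zero => simp
  | succ m =>
    apply le_of_eq
    have hne : ρ ≠ 0 := hρ0.ne'
    simp only [Nat.add_sub_cancel, pow_one, pow_succ]
    field_simp

lemma binomial {r : ℝ} (hr : -1 ≤ r) {y : ℝ} (hy0 : 0 ≤ y) (hy1 : y < 1) :
    ∑' n : ℕ, co r n * y ^ n = (1 - y) ^ r := by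
  obtain ⟨C, hC1, hC⟩ := co_bound r hr
  set ρ : ℝ := (y + 1) / 2 with hρ
  have hρ0 : 0 < ρ := by positivity
  have hρ1 : ρ < 1 := by simp only [hρ]; linarith
  have hyρ : y < ρ := by simp only [hρ]; linarith
  set t : Set ℝ := Set.Ioo (-ρ) ρ with ht
  have hy_t : y ∈ t := ⟨by linarith, hyρ⟩
  have h0_t : (0:ℝ) ∈ t := ⟨by linarith, hρ0⟩
  set f : ℝ → ℝ := fun z => ∑' n : ℕ, co r n * z ^ n with hf
  set D : ℝ → ℝ := fun z => ∑' n : ℕ, co r n * ((n : ℝ) * z ^ (n - 1)) with hD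
  have habs : ∀ z ∈ t, |z| ≤ ρ := fun z hz => abs_le.mpr ⟨hz.1.le, hz.2.le⟩
  have hbd : ∀ (n : ℕ), ∀ w ∈ t, ‖co r n * ((n : ℝ) * w ^ (n - 1))‖ ≤ C * ((n : ℝ) * ρ ^ (n - 1)) := by
    intro n w hw
    rw [Real.norm_eq_abs, abs_mul, abs_mul, abs_pow, Nat.abs_cast]
    have hle : |w| ^ (n - 1) ≤ ρ ^ (n - 1) := pow_le_pow_left₀ (abs_nonneg w) (habs w hw) _
    have h1 : (0:ℝ) ≤ (n : ℝ) * |w| ^ (n-1) := by positivity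
    exact mul_le_mul (hC n) (mul_le_mul_of_nonneg_left hle (Nat.cast_nonneg n)) h1
      (by linarith)
  have hg0 : Summable (fun n : ℕ => co r n * (0:ℝ) ^ n) := by
    apply summable_of_ne_finset_zero (s := {0})
    intro n hn
    simp only [Finset.mem_singleton] at hn
    simp [zero_pow hn]
  have hderiv : ∀ z ∈ t, HasDerivAt f (D z) z := by
    intro z hz
    exact hasDerivAt_tsum_of_isPreconnected
      (summable_deriv_bound C ρ hρ0 hρ1 (by linarith))
      isOpen_Ioo (convex_Ioo _ _).isPreconnected
      (fun n w hw => (hasDerivAt_pow n w).const_mul (co r n))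
      hbd h0_t hg0 hz
  -- summability facts at a point z ∈ t
  have hSf : ∀ z ∈ t, Summable (fun n : ℕ => co r n * z ^ n) := by
    intro z hz
    refine Summable.of_norm_bounded (summable_co_pow hC hρ0.le hρ1) (fun n => ?_)
    rw [Real.norm_eq_abs, abs_mul, abs_pow]
    exact mul_le_mul_of_nonneg_left (pow_le_pow_left₀ (abs_nonneg z) (habs z hz) _)
      (abs_nonneg _)
  have hSD : ∀ z ∈ t, Summable (fun n : ℕ => co r n * ((n : ℝ) * z ^ (n - 1))) := by
    intro z hz
    exact Summable.of_norm_bounded (summable_deriv_bound C ρ hρ0 hρ1 (by linarith))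
      (fun n => hbd n z hz)
  have hSW : ∀ z ∈ t, Summable (fun n : ℕ => co r n * (n : ℝ) * z ^ n) := by
    intro z hz
    refine Summable.of_norm_bounded (summable_aux C ρ hρ0.le hρ1 1) (fun n => ?_)
    rw [Real.norm_eq_abs, abs_mul, abs_mul, abs_pow, Nat.abs_cast, pow_one]
    have hle : |z| ^ n ≤ ρ ^ n := pow_le_pow_left₀ (abs_nonneg z) (habs z hz) _
    have h1 : (0:ℝ) ≤ |co r n| * (n : ℝ) := by positivity
    have h2 : |co r n| * (n:ℝ) ≤ C * (n:ℝ) := mul_le_mul_of_nonneg_right (hC n) (Nat.cast_nonneg n)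
    calc |co r n| * (n:ℝ) * |z| ^ n ≤ C * (n:ℝ) * ρ ^ n := by
          exact mul_le_mul h2 hle (by positivity) (by positivity)
      _ = C * ((n:ℝ) * ρ ^ n) := by ring
  have hSnR : ∀ z ∈ t, Summable (fun n : ℕ => co r n * ((n : ℝ) - r) * z ^ n) := by
    intro z hz
    exact ((hSW z hz).sub ((hSf z hz).mul_left r)).congr (fun n => by ring)
  -- the key differential identity
  have hkey : ∀ z ∈ t, (1 - z) * D z + r * f z = 0 := by
    intro z hz
    have hDshift : D z = ∑' n : ℕ, co r n * ((n : ℝ) - r) * z ^ n := by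
      simp only [hD]
      rw [Summable.tsum_eq_zero_add (hSD z hz)]
      simp only [Nat.cast_zero, zero_mul, mul_zero, zero_add, Nat.cast_add, Nat.cast_one,
        Nat.add_sub_cancel]
      apply tsum_congr
      intro n
      have := co_succ_mul r n
      linear_combination (z ^ n) * this
    have hW : z * D z = ∑' n : ℕ, co r n * (n : ℝ) * z ^ n := by
      rw [hDshift, ← tsum_mul_left]
      rw [Summable.tsum_eq_zero_add (hSW z hz)]
      simp only [Nat.cast_zero, zero_mul, mul_zero, zero_add, Nat.cast_add, Nat.cast_one]
      apply tsum_congr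
      intro n
      have := co_succ_mul r n
      have hz2 : z * (co r n * ((n:ℝ) - r) * z ^ n) = (co r n * ((n:ℝ)-r)) * z ^ (n+1) := by
        rw [pow_succ]; ring
      rw [hz2]
      linear_combination (-(z ^ (n+1))) * this
    have hrf : r * f z = ∑' n : ℕ, r * (co r n * z ^ n) := by
      rw [hf, ← tsum_mul_left]
    have hcomb : D z - z * D z + r * f z =
        ∑' n : ℕ, (co r n * ((n : ℝ) - r) * z ^ n - co r n * (n : ℝ) * z ^ n
          + r * (co r n * z ^ n)) := by
      rw [hW, hDshift, hrf, ← Summable.tsum_sub (hSnR z hz) (hSW z hz),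
        ← Summable.tsum_add ((hSnR z hz).sub (hSW z hz)) ((hSf z hz).mul_left r)]
    have hzero : (∑' n : ℕ, (co r n * ((n : ℝ) - r) * z ^ n - co r n * (n : ℝ) * z ^ n
          + r * (co r n * z ^ n))) = 0 := by
      convert tsum_zero with n
      ring
    have : D z - z * D z + r * f z = 0 := by rw [hcomb, hzero]
    linarith [this]
  -- h is constant
  set h : ℝ → ℝ := fun z => f z * (1 - z) ^ (-r) with hh
  have hH : ∀ z ∈ t, HasDerivAt h 0 z := by
    intro z hz
    have h1z : 0 < 1 - z := by
      have hz2 : z < ρ := hz.2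
      linarith
    have hinner : HasDerivAt (fun w : ℝ => 1 - w) (-1) z := by
      exact (hasDerivAt_id z).const_sub 1
    have h2 := Real.hasDerivAt_rpow_const (x := 1 - z) (p := -r) (Or.inl h1z.ne')
    have hrp : HasDerivAt (fun w : ℝ => (1 - w) ^ (-r)) (r * (1 - z) ^ (-r - 1)) z := by
      have h3 := h2.comp z hinner
      refine h3.congr_deriv ?_
      ring
    have hmul := (hderiv z hz).mul hrp
    have hval : D z * (1 - z) ^ (-r) + f z * (r * (1 - z) ^ (-r - 1)) = 0 := by
      have hsplit : (1 - z) ^ (-r) = (1 - z) ^ (-r - 1) * (1 - z) := by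
        rw [← Real.rpow_add_one h1z.ne' (-r - 1)]
        ring_nf
      rw [hsplit]
      linear_combination ((1 - z) ^ (-r - 1)) * hkey z hz
    rw [← hval]
    exact hmul
  have hconst : h 0 = h y := by
    refine (convex_Ioo (-ρ) ρ).is_const_of_fderivWithin_eq_zero
      (fun z hz => ((hH z hz).differentiableAt).differentiableWithinAt)
      (fun z hz => ?_) h0_t hy_t
    rw [fderivWithin_of_isOpen isOpen_Ioo hz, ((hH z hz).hasFDerivAt).fderiv]
    ext w
    simp
  have hf0 : f 0 = 1 := by
    simp only [hf]
    rw [tsum_eq_single 0 (fun n hn => by simp [zero_pow hn])]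
    simp [co_zero]
  have h0val : h 0 = 1 := by
    rw [hh]
    simp only [sub_zero, Real.one_rpow, mul_one, hf0]
  have hyval : f y * (1 - y) ^ (-r) = 1 := by
    have := hconst
    rw [h0val] at this
    exact this.symm
  have hpos : (0:ℝ) < 1 - y := by linarith
  have hne : (1 - y) ^ r ≠ 0 := (Real.rpow_pos_of_pos hpos r).ne'
  rw [Real.rpow_neg hpos.le] at hyval
  show f y = (1 - y) ^ r
  field_simp at hyval
  exact hyval

open MeasureTheory

lemma integrableOn_rpow_Ioc {c : ℝ} (hc : -1 < c) :
    IntegrableOn (fun t : ℝ => t ^ c) (Set.Ioc (0:ℝ) 1) := by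
  have := intervalIntegral.intervalIntegrable_rpow' (a := 0) (b := 1) hc
  rwa [intervalIntegrable_iff_integrableOn_Ioc_of_le zero_le_one] at this

lemma integral_rpow_Ioc {c : ℝ} (hc : -1 < c) :
    ∫ t in Set.Ioc (0:ℝ) 1, t ^ c = 1 / (c + 1) := by
  have h := integral_rpow (a := 0) (b := 1) (Or.inl hc)
  rw [intervalIntegral.integral_of_le zero_le_one] at h
  rw [h, Real.one_rpow, Real.zero_rpow (by linarith : c + 1 ≠ 0)]
  norm_num

lemma integrableOn_c {c : ℝ} (hc : -1 < c) :
    IntegrableOn (fun t : ℝ => t ^ c * (1 - t)) (Set.Ioc (0:ℝ) 1) := by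
  have h1 := integrableOn_rpow_Ioc hc
  have h2 := integrableOn_rpow_Ioc (show (-1:ℝ) < c + 1 by linarith)
  refine (h1.sub h2).congr ?_
  filter_upwards [MeasureTheory.ae_restrict_mem measurableSet_Ioc] with t ht
  simp only [Pi.sub_apply]
  rw [Real.rpow_add_one ht.1.ne' c]
  ring

lemma integral_c {c : ℝ} (hc : -1 < c) :
    ∫ t in Set.Ioc (0:ℝ) 1, t ^ c * (1 - t) = 1/(c+1) - 1/(c+2) := by
  rw [setIntegral_congr_fun (g := fun t : ℝ => t ^ c - t ^ (c+1)) measurableSet_Ioc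
    (fun t ht => by
      show t ^ c * (1 - t) = t ^ c - t ^ (c + 1)
      rw [Real.rpow_add_one ht.1.ne' c]; ring)]
  rw [integral_sub (integrableOn_rpow_Ioc hc) (integrableOn_rpow_Ioc (by linarith)),
    integral_rpow_Ioc hc, integral_rpow_Ioc (by linarith)]
  ring_nf

end GosperAux


open GosperAux MeasureTheory in
/-- Gosper's strange evaluation. -/
theorem stmt_4 (α β : ℝ) (hα : 0 < α) (hβ : 0 < β) :
    F21 (1 - α) β (β + 2) (β / (α + β)) = (β + 1) * (α / (α + β)) ^ α := by
  have hαβ : 0 < α + β := by linarith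
  set x : ℝ := β / (α + β) with hx
  have hx0 : 0 < x := div_pos hβ hαβ
  have hx1 : x < 1 := by rw [hx, div_lt_one hαβ]; linarith
  have hr : (-1:ℝ) ≤ α - 1 := by linarith
  obtain ⟨C, hC1, hC⟩ := co_bound (α - 1) hr
  have hco : ∀ n : ℕ, co (α - 1) n = rising (1 - α) n / n.factorial := by
    intro n
    rw [co, show -(α - 1) = 1 - α by ring]
  set T : ℕ → ℝ := fun n => β * (β + 1) * (co (α - 1) n * x ^ n) with hT
  set F : ℕ → ℝ → ℝ := fun n t => T n * (t ^ ((β : ℝ) + n - 1) * (1 - t)) with hF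
  have hc : ∀ n : ℕ, (-1:ℝ) < β + n - 1 := by
    intro n
    have : (0:ℝ) ≤ n := Nat.cast_nonneg n
    linarith
  have hbn : ∀ n : ℕ, (0:ℝ) < β + n := by
    intro n; have : (0:ℝ) ≤ n := Nat.cast_nonneg n; linarith
  -- step 1: termwise identity for F21
  have hterm : ∀ n : ℕ,
      rising (1-α) n * rising β n / (rising 1 n * rising (β+2) n) * x ^ n
        = T n * (1/(β+n) - 1/(β+n+1)) := by
    intro n
    have hR2 : (0:ℝ) < rising (β+2) n := rising_pos (by linarith) n
    have hkey : rising β n / rising (β+2) n = β*(β+1) * (1/(β+n) - 1/(β+n+1)) := by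
      have h := rising_ratio hβ n
      have h1 := hbn n
      field_simp
      linear_combination h
    rw [rising_one_eq]
    calc rising (1-α) n * rising β n / ((n.factorial : ℝ) * rising (β+2) n) * x ^ n
        = (rising (1-α) n / n.factorial * x ^ n) * (rising β n / rising (β+2) n) := by
          ring
      _ = T n * (1/(β+n) - 1/(β+n+1)) := by
          rw [hkey, hT]
          simp only []
          rw [hco n]
          ring
  -- step 2: each F n integrates to the same value
  have hInt : ∀ n : ℕ, IntegrableOn (F n) (Set.Ioc (0:ℝ) 1) := by
    intro n
    exact (integrableOn_c (hc n)).const_mul (T n)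
  have hint : ∀ n : ℕ, ∫ t in Set.Ioc (0:ℝ) 1, F n t = T n * (1/(β+n) - 1/(β+n+1)) := by
    intro n
    simp only [hF]
    rw [integral_const_mul, integral_c (hc n)]
    have h1 := hbn n
    have e1 : (β + (n:ℝ) - 1) + 1 = β + n := by ring
    have e2 : (β + (n:ℝ) - 1) + 2 = β + n + 1 := by ring
    rw [e1, e2]
  -- step 3: summability of norm integrals
  have hfrac : ∀ n : ℕ, 0 ≤ 1/(β+(n:ℝ)) - 1/(β+n+1) ∧
      1/(β+(n:ℝ)) - 1/(β+n+1) ≤ 1/(β*(β+1)) := by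
    intro n
    have h0 := hbn n
    have h1 : (0:ℝ) < β + n + 1 := by linarith
    have hn0 : (0:ℝ) ≤ n := Nat.cast_nonneg n
    constructor
    · rw [sub_nonneg]
      exact one_div_le_one_div_of_le h0 (by linarith)
    · have he : 1/(β+(n:ℝ)) - 1/(β+n+1) = 1/((β+n)*(β+n+1)) := by
        field_simp
        ring
      rw [he]
      apply one_div_le_one_div_of_le (by positivity)
      nlinarith
  have hTabs : ∀ n : ℕ, |T n| = β * (β+1) * (|co (α-1) n| * x ^ n) := by
    intro n
    rw [hT]
    simp only []
    rw [abs_mul, abs_mul, abs_of_pos hβ, abs_of_pos (show (0:ℝ) < β + 1 by linarith),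
      abs_mul, abs_of_pos (pow_pos hx0 n)]
  have hnorm : ∀ n : ℕ, ∫ t in Set.Ioc (0:ℝ) 1, ‖F n t‖
      = |T n| * (1/(β+n) - 1/(β+n+1)) := by
    intro n
    have : ∀ t ∈ Set.Ioc (0:ℝ) 1, ‖F n t‖ = |T n| * (t ^ ((β:ℝ)+n-1) * (1-t)) := by
      intro t ht
      simp only [hF, Real.norm_eq_abs, abs_mul]
      rw [abs_of_nonneg (Real.rpow_nonneg ht.1.le _), abs_of_nonneg (by linarith [ht.2] : (0:ℝ) ≤ 1 - t)]
    rw [setIntegral_congr_fun measurableSet_Ioc this, integral_const_mul, integral_c (hc n)]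
    have e1 : (β + (n:ℝ) - 1) + 1 = β + n := by ring
    have e2 : (β + (n:ℝ) - 1) + 2 = β + n + 1 := by ring
    rw [e1, e2]
  have hsum : Summable (fun n : ℕ => ∫ t in Set.Ioc (0:ℝ) 1, ‖F n t‖) := by
    refine Summable.of_nonneg_of_le (fun n => ?_) (fun n => ?_)
      (summable_co_pow hC hx0.le hx1)
    · rw [hnorm n]
      exact mul_nonneg (abs_nonneg _) (hfrac n).1
    · rw [hnorm n, hTabs n]
      calc β * (β+1) * (|co (α-1) n| * x ^ n) * (1/(β+(n:ℝ)) - 1/(β+n+1))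
          ≤ β * (β+1) * (|co (α-1) n| * x ^ n) * (1/(β*(β+1))) := by
            apply mul_le_mul_of_nonneg_left (hfrac n).2 (by positivity)
        _ = |co (α-1) n| * x ^ n := by
            field_simp
  -- step 4: swap sum and integral
  have hswap : ∑' n : ℕ, ∫ t in Set.Ioc (0:ℝ) 1, F n t
      = ∫ t in Set.Ioc (0:ℝ) 1, ∑' n : ℕ, F n t :=
    integral_tsum_of_summable_integral_norm hInt hsum
  -- step 5: pointwise evaluation of the sum via the binomial series
  have hpt : ∀ t ∈ Set.Ioc (0:ℝ) 1, (∑' n : ℕ, F n t)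
      = (β+1) * (β * (t ^ (β-1) * (1-t) * (1 - x*t) ^ (α-1))) := by
    intro t ht
    have ht0 : 0 < t := ht.1
    have hxt0 : 0 ≤ x*t := by positivity
    have hxt1 : x*t < 1 := by nlinarith [ht.2]
    have hterm2 : ∀ n : ℕ, F n t
        = (β*(β+1) * (t ^ (β-1) * (1-t))) * (co (α-1) n * (x*t)^n) := by
      intro n
      simp only [hF, hT]
      have he : t ^ ((β:ℝ) + n - 1) = t ^ (β - 1) * t ^ n := by
        rw [← Real.rpow_natCast t n, ← Real.rpow_add ht0]
        ring_nf
      rw [he, mul_pow]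
      ring
    rw [tsum_congr hterm2, tsum_mul_left, binomial hr hxt0 hxt1]
    ring
  -- step 6: FTC
  have hFTC : ∫ t in Set.Ioc (0:ℝ) 1, β * (t ^ (β-1) * (1-t) * (1 - x*t) ^ (α-1))
      = (1-x) ^ α := by
    have hcont : ContinuousOn (fun t : ℝ => t ^ β * (1 - x*t) ^ α) (Set.Icc 0 1) := by
      apply ContinuousOn.mul
      · intro s _
        exact (Real.continuousAt_rpow_const s β (Or.inr hβ.le)).continuousWithinAt
      · intro s hs
        have hne : 1 - x*s ≠ 0 := by nlinarith [hs.1, hs.2]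
        exact (ContinuousAt.comp (g := fun w : ℝ => w ^ α) (f := fun s : ℝ => 1 - x * s)
          (Real.continuousAt_rpow_const _ α (Or.inl hne)) (by fun_prop)).continuousWithinAt
    have hG : ∀ t ∈ Set.Ioo (0:ℝ) 1, HasDerivAt (fun t : ℝ => t ^ β * (1 - x*t) ^ α)
        (β * (t ^ (β-1) * (1-t) * (1 - x*t) ^ (α-1))) t := by
      intro t ht
      have ht0 : 0 < t := ht.1
      have hxt : 0 < 1 - x*t := by nlinarith [ht.2]
      have h1 : HasDerivAt (fun t : ℝ => t ^ β) (β * t ^ (β-1)) t :=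
        Real.hasDerivAt_rpow_const (Or.inl ht0.ne')
      have hin : HasDerivAt (fun t : ℝ => 1 - x*t) (-x) t := by
        simpa using ((hasDerivAt_id t).const_mul x).const_sub 1
      have h2 : HasDerivAt (fun t : ℝ => (1 - x*t) ^ α) (α * (1 - x*t) ^ (α-1) * (-x)) t :=
        by have h := (Real.hasDerivAt_rpow_const (x := 1 - x*t) (p := α) (Or.inl hxt.ne')).comp t hin; exact h
      have h3 := h1.mul h2
      refine h3.congr_deriv ?_
      have e1 : (1 - x*t) ^ α = (1 - x*t) ^ (α-1) * (1 - x*t) := by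
        rw [← Real.rpow_add_one hxt.ne' (α-1)]; ring_nf
      have e2 : t ^ β = t ^ (β-1) * t := by
        rw [← Real.rpow_add_one ht0.ne' (β-1)]; ring_nf
      have hβx : (α + β) * x = β := by
        rw [hx]; field_simp
      rw [e1, e2]
      linear_combination (-(t ^ (β-1) * (1 - x*t)^(α-1) * t)) * hβx
    have hii : IntervalIntegrable
        (fun t : ℝ => β * (t ^ (β-1) * (1-t) * (1 - x*t) ^ (α-1))) volume 0 1 := by
      rw [intervalIntegrable_iff_integrableOn_Ioc_of_le zero_le_one]
      apply Integrable.const_mul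
      have hbase := integrableOn_c (show (-1:ℝ) < β - 1 by linarith)
      set M : ℝ := max 1 ((1-x) ^ (α-1)) with hM
      have hmeas : AEStronglyMeasurable (fun t : ℝ => (1 - x*t) ^ (α-1))
          (volume.restrict (Set.Ioc (0:ℝ) 1)) := by
        apply Measurable.aestronglyMeasurable
        fun_prop
      have hbdd : ∀ᵐ t ∂(volume.restrict (Set.Ioc (0:ℝ) 1)),
          ‖(1 - x*t) ^ (α-1)‖ ≤ M := by
        rw [ae_restrict_iff' measurableSet_Ioc]
        apply ae_of_all
        intro t ht
        have hb0 : 0 < 1 - x*t := by nlinarith [ht.1, ht.2]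
        have hb1 : 1 - x*t ≤ 1 := by nlinarith [ht.1]
        have hbx : 1 - x ≤ 1 - x*t := by nlinarith [ht.2]
        rw [Real.norm_eq_abs, abs_of_nonneg (Real.rpow_nonneg hb0.le _)]
        rcases le_or_gt 0 (α - 1) with hcase | hcase
        · calc (1 - x*t) ^ (α-1) ≤ 1 ^ (α-1) :=
              Real.rpow_le_rpow hb0.le hb1 hcase
            _ = 1 := Real.one_rpow _
            _ ≤ M := le_max_left _ _
        · calc (1 - x*t) ^ (α-1) ≤ (1-x) ^ (α-1) :=
              Real.rpow_le_rpow_of_nonpos (by linarith) hbx hcase.le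
            _ ≤ M := le_max_right _ _
      have := Integrable.bdd_mul (c := M) hbase hmeas hbdd
      exact this.congr (ae_of_all _ (fun t => by ring))
    have hval := intervalIntegral.integral_eq_sub_of_hasDerivAt_of_le zero_le_one hcont hG hii
    rw [intervalIntegral.integral_of_le zero_le_one] at hval
    rw [hval]
    rw [Real.one_rpow, Real.zero_rpow hβ.ne']
    norm_num
  -- assemble
  have hstep : ∑' n : ℕ, T n * (1/(β+(n:ℝ)) - 1/(β+n+1))
      = ∑' n : ℕ, ∫ t in Set.Ioc (0:ℝ) 1, F n t :=
    tsum_congr (fun n => (hint n).symm)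
  rw [F21]
  rw [tsum_congr hterm, hstep, hswap, setIntegral_congr_fun measurableSet_Ioc hpt,
    integral_const_mul, hFTC]
  have hαx : α / (α + β) = 1 - x := by
    rw [hx]; field_simp; ring
  rw [hαx]
end

section
/- Limit of the q-binomial theorem: for a real number α and complex z with |z| < 1, one has lim_{q → 1⁻} ∑_{n=0}^∞ ((q^α; q)_n / (q; q)_n) z^n = ∑_{n=0}^∞ ((α)_n / n!) z^n = (1 - z)^{-α}, where the limit is taken over real q ∈ (0,1). -/
/-- Complex rising factorial $(a)_n$. -/
noncomputable def risingC (a : ℂ) (n : ℕ) : ℂ := ∏ j ∈ Finset.range n, (a + j)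

open Filter Set Real Finset
open scoped Topology

lemma ratio_le {q s t : ℝ} (hq0 : 0 < q) (hq1 : q < 1) (hs : 0 < s) (ht : 0 < t) :
    1 - q ^ s ≤ max 1 (s / t) * (1 - q ^ t) := by
  have hqt1 : q ^ t < 1 := Real.rpow_lt_one hq0.le hq1 ht
  have hqtpos : 0 < q ^ t := Real.rpow_pos_of_pos hq0 t
  rcases le_or_gt s t with h | h
  · have h1 : q ^ t ≤ q ^ s := Real.rpow_le_rpow_of_exponent_ge hq0 hq1.le h
    nlinarith [le_max_left 1 (s/t)]
  · have hc : 1 ≤ s / t := (one_le_div ht).2 h.le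
    have hber : 1 + (s/t) * (q ^ t - 1) ≤ (1 + (q ^ t - 1)) ^ (s/t) :=
      one_add_mul_self_le_rpow_one_add (by linarith) hc
    have hre : (1 + (q ^ t - 1)) ^ (s/t) = q ^ s := by
      rw [show 1 + (q ^ t - 1) = q ^ t by ring, ← Real.rpow_mul hq0.le,
        mul_div_cancel₀ _ ht.ne']
    rw [hre] at hber
    have : 1 - q ^ s ≤ (s/t) * (1 - q ^ t) := by nlinarith
    exact this.trans (by nlinarith [le_max_right 1 (s/t)])

lemma slope_lim (s : ℝ) :
    Tendsto (fun q : ℝ => (1 - q ^ s) / (1 - q)) (𝓝[Set.Ioo (0:ℝ) 1] 1) (𝓝 s) := by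
  have h := (Real.hasDerivAt_rpow_const (x := 1) (p := s) (Or.inl one_ne_zero))
  have h2 := hasDerivAt_iff_tendsto_slope.mp h
  simp only [Real.one_rpow, mul_one] at h2
  have h3 : Tendsto (slope (fun x : ℝ => x ^ s) 1) (𝓝[Set.Ioo (0:ℝ) 1] 1) (𝓝 s) :=
    h2.mono_left (nhdsWithin_mono 1 (fun x hx => ne_of_lt hx.2))
  refine h3.congr (fun q => ?_)
  simp only [slope_def_field, Real.one_rpow]
  rw [← neg_div_neg_eq]
  ring_nf

lemma factor_lim (α : ℝ) (j : ℕ) :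
    Tendsto (fun q : ℝ => (1 - q ^ (α + j)) / (1 - q ^ ((j:ℝ) + 1)))
      (𝓝[Set.Ioo (0:ℝ) 1] 1) (𝓝 ((α + j) / ((j:ℝ) + 1))) := by
  have hj : ((j:ℝ) + 1) ≠ 0 := by positivity
  have h := (slope_lim (α + j)).div (slope_lim ((j:ℝ) + 1)) hj
  refine h.congr' ?_
  filter_upwards [self_mem_nhdsWithin] with q hq
  exact div_div_div_cancel_right₀ (sub_ne_zero_of_ne (ne_of_lt hq.2).symm) _ _

lemma factor_bound (α : ℝ) {q : ℝ} (hq : q ∈ Set.Ico (1/2 : ℝ) 1) (j : ℕ) :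
    |1 - q ^ (α + j)| ≤ (if (j:ℝ) < |α| then (2:ℝ) ^ |α| else 1) *
      ((|α| + j + 1) / ((j:ℝ) + 1)) * (1 - q ^ ((j:ℝ) + 1)) := by
  obtain ⟨hq2, hq1⟩ := hq
  have hq0 : 0 < q := by linarith
  have hj1 : (0:ℝ) < (j:ℝ) + 1 := by positivity
  have hden : 0 < 1 - q ^ ((j:ℝ) + 1) := by
    have := Real.rpow_lt_one hq0.le hq1 hj1
    linarith
  have hDge : (1:ℝ) ≤ (|α| + j + 1) / ((j:ℝ) + 1) := by
    rw [le_div_iff₀ hj1]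
    have := abs_nonneg α
    linarith
  have h2a : (1:ℝ) ≤ (2:ℝ) ^ |α| := Real.one_le_rpow one_le_two (abs_nonneg α)
  have hLe1 : (1:ℝ) ≤ (if (j:ℝ) < |α| then (2:ℝ) ^ |α| else 1) := by
    split <;> [exact h2a; exact le_rfl]
  rcases le_or_gt 0 (α + j) with hs | hs
  · rcases eq_or_lt_of_le hs with hs0 | hs0
    · rw [← hs0, Real.rpow_zero, sub_self, abs_zero]
      have h0 : (0:ℝ) ≤ (if (j:ℝ) < |α| then (2:ℝ) ^ |α| else 1) := by linarith
      have h1 : (0:ℝ) ≤ (|α| + j + 1) / ((j:ℝ) + 1) := by linarith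
      positivity
    · have hle : q ^ (α + j) ≤ 1 := Real.rpow_le_one hq0.le hq1.le hs
      rw [abs_of_nonneg (by linarith)]
      have h1 := ratio_le hq0 hq1 hs0 hj1
      have hmax : max 1 ((α + j) / ((j:ℝ) + 1)) ≤ (|α| + j + 1) / ((j:ℝ) + 1) := by
        refine max_le hDge ?_
        rw [div_le_div_iff_of_pos_right hj1]
        nlinarith [le_abs_self α]
      calc 1 - q ^ (α + j) ≤ max 1 ((α + j) / ((j:ℝ) + 1)) * (1 - q ^ ((j:ℝ)+1)) := h1
        _ ≤ ((|α| + j + 1) / ((j:ℝ) + 1)) * (1 - q ^ ((j:ℝ)+1)) :=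
            mul_le_mul_of_nonneg_right hmax hden.le
        _ ≤ _ := by
            rw [mul_assoc]
            exact le_mul_of_one_le_left (by positivity) hLe1
  · -- α + j < 0
    set s : ℝ := -(α + (j:ℝ)) with hsdef
    have hspos : 0 < s := by simp [hsdef]; linarith
    have hjα : (j:ℝ) < |α| := by
      have h1 : -|α| ≤ α := neg_abs_le α
      nlinarith [abs_nonneg α]
    rw [if_pos hjα]
    have hqs : q ^ (α + (j:ℝ)) = (q ^ s)⁻¹ := by
      rw [hsdef, Real.rpow_neg hq0.le, inv_inv]
    have hqspos : 0 < q ^ s := Real.rpow_pos_of_pos hq0 s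
    have hbig : 1 ≤ q ^ (α + (j:ℝ)) :=
      Real.one_le_rpow_of_pos_of_le_one_of_nonpos hq0 hq1.le hs.le
    rw [abs_of_nonpos (by linarith), neg_sub, hqs]
    have heq : (q ^ s)⁻¹ - 1 = (q ^ s)⁻¹ * (1 - q ^ s) := by
      field_simp
    rw [heq]
    have hb1 : (q ^ s)⁻¹ ≤ (2:ℝ) ^ |α| := by
      have hinv : (q ^ s)⁻¹ = (q⁻¹) ^ s := by
        rw [← Real.inv_rpow hq0.le]
      have hqi : q⁻¹ ≤ 2 := by
        have := inv_anti₀ (show (0:ℝ) < 1/2 by norm_num) hq2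
        simpa using this
      have : (q⁻¹) ^ s ≤ (2:ℝ) ^ s :=
        Real.rpow_le_rpow (by positivity) hqi hspos.le
      have h2 : (2:ℝ) ^ s ≤ (2:ℝ) ^ |α| := by
        apply Real.rpow_le_rpow_of_exponent_le one_le_two
        have : α ≥ -|α| := neg_abs_le α
        simp only [hsdef]
        have : (0:ℝ) ≤ j := Nat.cast_nonneg j
        nlinarith [neg_abs_le α]
      linarith [hinv ▸ this]
    have hb2 : 1 - q ^ s ≤ ((|α| + j + 1) / ((j:ℝ) + 1)) * (1 - q ^ ((j:ℝ)+1)) := by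
      have h1 := ratio_le hq0 hq1 hspos hj1
      have hmax : max 1 (s / ((j:ℝ) + 1)) ≤ (|α| + j + 1) / ((j:ℝ) + 1) := by
        refine max_le hDge ?_
        have hss : s ≤ |α| + j + 1 := by
          simp only [hsdef]
          nlinarith [neg_abs_le α, Nat.cast_nonneg (α := ℝ) j]
        rw [div_le_div_iff_of_pos_right hj1]
        exact hss
      calc 1 - q ^ s ≤ max 1 (s / ((j:ℝ)+1)) * (1 - q ^ ((j:ℝ)+1)) := h1
        _ ≤ _ := mul_le_mul_of_nonneg_right hmax hden.le
    have hnn : 0 ≤ 1 - q ^ s := by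
      have := Real.rpow_le_one hq0.le hq1.le hspos.le
      linarith
    calc (q ^ s)⁻¹ * (1 - q ^ s)
        ≤ (2:ℝ) ^ |α| * (((|α| + j + 1) / ((j:ℝ) + 1)) * (1 - q ^ ((j:ℝ)+1))) :=
          mul_le_mul hb1 hb2 hnn (by positivity)
      _ = _ := by ring

lemma qratio_eq (α : ℝ) {q : ℝ} (hq0 : 0 < q) (n : ℕ) :
    qPoch ((q ^ α : ℝ) : ℂ) (q : ℂ) n / qPoch (q : ℂ) (q : ℂ) n
      = ((∏ j ∈ Finset.range n, ((1 - q ^ (α + j)) / (1 - q ^ ((j:ℝ) + 1))) : ℝ) : ℂ) := by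
  have h1 : qPoch ((q ^ α : ℝ) : ℂ) (q : ℂ) n
      = ((∏ j ∈ Finset.range n, (1 - q ^ (α + (j:ℝ))) : ℝ) : ℂ) := by
    rw [qPoch, Complex.ofReal_prod]
    refine Finset.prod_congr rfl fun j _ => ?_
    have : q ^ (α + (j:ℝ)) = q ^ α * q ^ (j:ℕ) := by
      rw [Real.rpow_add hq0, Real.rpow_natCast]
    rw [this]
    push_cast
    ring
  have h2 : qPoch (q : ℂ) (q : ℂ) n
      = ((∏ j ∈ Finset.range n, (1 - q ^ ((j:ℝ) + 1)) : ℝ) : ℂ) := by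
    rw [qPoch, Complex.ofReal_prod]
    refine Finset.prod_congr rfl fun j _ => ?_
    have : q ^ ((j:ℝ) + 1) = q * q ^ (j:ℕ) := by
      rw [show ((j:ℝ) + 1) = (1:ℝ) + (j:ℝ) by ring, Real.rpow_add hq0,
        Real.rpow_natCast, Real.rpow_one]
    rw [this]
    push_cast
    ring
  rw [h1, h2, Finset.prod_div_distrib, Complex.ofReal_div, Complex.ofReal_prod,
    Complex.ofReal_prod]

lemma prod_bound (α : ℝ) {q : ℝ} (hq : q ∈ Set.Ico (1/2 : ℝ) 1) (n : ℕ) :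
    |∏ j ∈ Finset.range n, ((1 - q ^ (α + j)) / (1 - q ^ ((j:ℝ) + 1)))|
      ≤ ((2:ℝ) ^ |α|) ^ (⌈|α|⌉₊) * ∏ j ∈ Finset.range n, ((|α| + j + 1) / ((j:ℝ) + 1)) := by
  have hq0 : (0:ℝ) < q := by have := hq.1; linarith
  have hq1 := hq.2
  have hden : ∀ j : ℕ, 0 < 1 - q ^ ((j:ℝ) + 1) := fun j => by
    have := Real.rpow_lt_one hq0.le hq1 (by positivity : (0:ℝ) < (j:ℝ)+1)
    linarith
  have h2a : (1:ℝ) ≤ (2:ℝ) ^ |α| := Real.one_le_rpow one_le_two (abs_nonneg α)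
  rw [Finset.abs_prod]
  have step1 : ∀ j ∈ Finset.range n,
      |(1 - q ^ (α + j)) / (1 - q ^ ((j:ℝ) + 1))|
        ≤ (if (j:ℝ) < |α| then (2:ℝ) ^ |α| else 1) * ((|α| + j + 1) / ((j:ℝ) + 1)) := by
    intro j _
    rw [abs_div, abs_of_pos (hden j), div_le_iff₀ (hden j)]
    exact factor_bound α hq j
  calc ∏ j ∈ Finset.range n, |(1 - q ^ (α + j)) / (1 - q ^ ((j:ℝ) + 1))|
      ≤ ∏ j ∈ Finset.range n,
          ((if (j:ℝ) < |α| then (2:ℝ) ^ |α| else 1) * ((|α| + j + 1) / ((j:ℝ) + 1))) :=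
        Finset.prod_le_prod (fun j _ => abs_nonneg _) step1
    _ = (∏ j ∈ Finset.range n, (if (j:ℝ) < |α| then (2:ℝ) ^ |α| else 1)) *
          ∏ j ∈ Finset.range n, ((|α| + j + 1) / ((j:ℝ) + 1)) := Finset.prod_mul_distrib
    _ ≤ ((2:ℝ) ^ |α|) ^ (⌈|α|⌉₊) * ∏ j ∈ Finset.range n, ((|α| + j + 1) / ((j:ℝ) + 1)) := by
        have hD : (0:ℝ) ≤ ∏ j ∈ Finset.range n, ((|α| + j + 1) / ((j:ℝ) + 1)) := by
          apply Finset.prod_nonneg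
          intro j _
          positivity
        refine mul_le_mul_of_nonneg_right ?_ hD
        have hL : ∀ j : ℕ, (if (j:ℝ) < |α| then (2:ℝ) ^ |α| else 1)
            = (if j ∈ Finset.range (⌈|α|⌉₊) then (2:ℝ) ^ |α| else 1) := by
          intro j
          simp only [Finset.mem_range, Nat.lt_ceil]
        simp_rw [hL]
        rw [Finset.prod_ite_mem, Finset.prod_const]
        apply pow_le_pow_right₀ h2a
        exact le_trans (Finset.card_le_card (Finset.inter_subset_right))
          (le_of_eq (Finset.card_range _))

lemma rising_prod_eq (α : ℝ) (n : ℕ) :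
    ((∏ j ∈ Finset.range n, ((α + j) / ((j:ℝ) + 1)) : ℝ) : ℂ)
      = risingC (α : ℂ) n / (n.factorial : ℂ) := by
  have h2 : (∏ j ∈ Finset.range n, ((j:ℝ) + 1)) = (n.factorial : ℝ) := by
    rw [← Finset.prod_range_add_one_eq_factorial n]
    push_cast
    rfl
  rw [Finset.prod_div_distrib, Complex.ofReal_div, h2, risingC, Complex.ofReal_prod]
  norm_cast

lemma D_summable (α : ℝ) {r : ℝ} (hr0 : 0 ≤ r) (hr : r < 1) :
    Summable (fun n : ℕ => (∏ j ∈ Finset.range n, ((|α| + j + 1) / ((j:ℝ) + 1))) * r ^ n) := by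
  rcases eq_or_lt_of_le hr0 with h0 | h0
  · apply summable_of_ne_finset_zero (s := {0})
    intro n hn
    simp only [Finset.mem_singleton] at hn
    rw [← h0, zero_pow hn, mul_zero]
  have hD : ∀ n, 0 < ∏ j ∈ Finset.range n, ((|α| + j + 1) / ((j:ℝ) + 1)) := by
    intro n
    apply Finset.prod_pos
    intro j _
    positivity
  apply summable_of_ratio_test_tendsto_lt_one hr
  · exact Filter.Eventually.of_forall fun n => by positivity
  · have key : ∀ n : ℕ, ‖(∏ j ∈ Finset.range (n+1), ((|α| + j + 1) / ((j:ℝ) + 1))) * r ^ (n+1)‖ /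
        ‖(∏ j ∈ Finset.range n, ((|α| + j + 1) / ((j:ℝ) + 1))) * r ^ n‖
        = ((|α| + n + 1) / ((n:ℝ) + 1)) * r := by
      intro n
      have hpos1 : 0 < (∏ j ∈ Finset.range (n+1), ((|α| + j + 1) / ((j:ℝ) + 1))) * r ^ (n+1) := by
        positivity
      have hpos2 : 0 < (∏ j ∈ Finset.range n, ((|α| + j + 1) / ((j:ℝ) + 1))) * r ^ n := by
        positivity
      rw [Real.norm_eq_abs, Real.norm_eq_abs, abs_of_pos hpos1, abs_of_pos hpos2,
        Finset.prod_range_succ, pow_succ]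
      field_simp
    simp_rw [key]
    have h1 : Filter.Tendsto (fun n : ℕ => (|α| + n + 1) / ((n:ℝ) + 1)) Filter.atTop (𝓝 1) := by
      have he : ∀ n : ℕ, (|α| + n + 1) / ((n:ℝ) + 1) = |α| / ((n:ℝ)+1) + 1 := by
        intro n
        field_simp
        ring
      simp_rw [he]
      have h2 : Filter.Tendsto (fun n : ℕ => |α| / ((n:ℝ)+1)) Filter.atTop (𝓝 0) := by
        apply Filter.Tendsto.div_atTop tendsto_const_nhds
        exact Filter.tendsto_atTop_add_const_right _ 1 tendsto_natCast_atTop_atTop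
      simpa using h2.add tendsto_const_nhds
    simpa using h1.mul_const r

lemma part1 (α : ℝ) (z : ℂ) (hz : ‖z‖ < 1) :
    Filter.Tendsto
      (fun q : ℝ => ∑' n : ℕ, qPoch ((q ^ α : ℝ) : ℂ) (q : ℂ) n / qPoch (q : ℂ) (q : ℂ) n * z ^ n)
      (nhdsWithin 1 (Set.Ioo (0 : ℝ) 1))
      (nhds (∑' n : ℕ, risingC (α : ℂ) n / (n.factorial : ℂ) * z ^ n)) := by
  set D : ℕ → ℝ := fun n => ∏ j ∈ Finset.range n, ((|α| + j + 1) / ((j:ℝ) + 1)) with hD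
  set C : ℝ := ((2:ℝ) ^ |α|) ^ (⌈|α|⌉₊) with hC
  have hC0 : 0 ≤ C := by positivity
  have key := tendsto_tsum_of_dominated_convergence
    (𝓕 := nhdsWithin (1:ℝ) (Set.Ioo (0 : ℝ) 1))
    (f := fun (q : ℝ) (n : ℕ) =>
      ((∏ j ∈ Finset.range n, ((1 - q ^ (α + j)) / (1 - q ^ ((j:ℝ) + 1))) : ℝ) : ℂ) * z ^ n)
    (g := fun n : ℕ => risingC (α : ℂ) n / (n.factorial : ℂ) * z ^ n)
    (bound := fun n : ℕ => C * (D n * ‖z‖ ^ n)) ?_ ?_ ?_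
  · refine Filter.Tendsto.congr' ?_ key
    filter_upwards [self_mem_nhdsWithin] with q hq
    exact tsum_congr fun n => by rw [qratio_eq α hq.1 n]
  · exact (D_summable α (norm_nonneg z) hz).mul_left C
  · -- pointwise convergence
    intro n
    have h1 : Filter.Tendsto
        (fun q : ℝ => (∏ j ∈ Finset.range n, ((1 - q ^ (α + j)) / (1 - q ^ ((j:ℝ) + 1))) : ℝ))
        (nhdsWithin 1 (Set.Ioo (0 : ℝ) 1))
        (𝓝 (∏ j ∈ Finset.range n, ((α + j) / ((j:ℝ) + 1)))) := by
      apply tendsto_finset_prod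
      intro j _
      exact factor_lim α j
    have h2 := ((Complex.continuous_ofReal.tendsto _).comp h1).mul_const (z ^ n)
    rw [rising_prod_eq α n] at h2
    exact h2
  · -- bound
    have hev : ∀ᶠ q in nhdsWithin (1:ℝ) (Set.Ioo (0 : ℝ) 1), q ∈ Set.Ico (1/2 : ℝ) 1 := by
      have h12 : ∀ᶠ q in nhdsWithin (1:ℝ) (Set.Ioo (0 : ℝ) 1), (1/2 : ℝ) < q :=
        eventually_nhdsWithin_of_eventually_nhds
          (eventually_gt_nhds (by norm_num : (1/2:ℝ) < 1))
    -- also q < 1 from the set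
      filter_upwards [h12, self_mem_nhdsWithin] with q h1 h2
      exact ⟨h1.le, h2.2⟩
    filter_upwards [hev] with q hq n
    rw [norm_mul, norm_pow, Complex.norm_real, Real.norm_eq_abs]
    have := prod_bound α hq n
    have hzn : (0:ℝ) ≤ ‖z‖ ^ n := by positivity
    calc |∏ j ∈ Finset.range n, ((1 - q ^ (α + j)) / (1 - q ^ ((j:ℝ) + 1)))| * ‖z‖ ^ n
        ≤ (C * D n) * ‖z‖ ^ n := mul_le_mul_of_nonneg_right this hzn
      _ = C * (D n * ‖z‖ ^ n) := by ring

open FormalMultilinearSeries in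
set_option maxHeartbeats 1000000 in
lemma part2 (α : ℝ) (z : ℂ) (hz : ‖z‖ < 1) :
    (∑' n : ℕ, risingC (α : ℂ) n / (n.factorial : ℂ) * z ^ n) = (1 - z) ^ (-(α : ℂ)) := by
  classical
  set c : ℕ → ℂ := fun n => risingC (α : ℂ) n / (n.factorial : ℂ) with hc
  -- recurrence
  have hrec : ∀ n : ℕ, ((n : ℂ) + 1) * c (n + 1) = ((α : ℂ) + n) * c n := by
    intro n
    have hfac : ((n+1).factorial : ℂ) = ((n:ℂ) + 1) * (n.factorial : ℂ) := by
      push_cast [Nat.factorial_succ]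
      ring
    have hris : risingC (α : ℂ) (n + 1) = risingC (α : ℂ) n * ((α : ℂ) + n) := by
      rw [risingC, risingC, Finset.prod_range_succ]
    have h1 : ((n:ℂ) + 1) ≠ 0 := Nat.cast_add_one_ne_zero n
    have h2 : ((n.factorial : ℂ)) ≠ 0 := by
      exact_mod_cast Nat.cast_ne_zero.2 n.factorial_ne_zero
    rw [hc]
    simp only
    rw [hfac, hris]
    field_simp
  -- norm bound on coefficients
  have hcb : ∀ n : ℕ, ‖c n‖ ≤ ∏ j ∈ Finset.range n, ((|α| + j + 1) / ((j:ℝ) + 1)) := by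
    intro n
    have hfac : (∏ j ∈ Finset.range n, ((j:ℝ) + 1)) = (n.factorial : ℝ) := by
      rw [← Finset.prod_range_add_one_eq_factorial n]
      push_cast
      rfl
    have h1 : ‖c n‖ = (∏ j ∈ Finset.range n, ‖(α : ℂ) + (j : ℂ)‖) / (n.factorial : ℝ) := by
      rw [hc]
      simp only
      rw [norm_div, risingC, norm_prod]
      congr 1
      simp [Complex.norm_natCast]
    rw [h1, ← hfac, ← Finset.prod_div_distrib]
    apply Finset.prod_le_prod
    · intro j _
      positivity
    · intro j _
      rw [div_le_div_iff₀ (by positivity) (by positivity)]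
      have : ‖(α : ℂ) + (j : ℂ)‖ = |α + (j:ℝ)| := by
        rw [show (α : ℂ) + (j : ℂ) = ((α + (j:ℝ) : ℝ) : ℂ) by push_cast; ring,
          Complex.norm_real, Real.norm_eq_abs]
      rw [this]
      have habs : |α + (j:ℝ)| ≤ |α| + j + 1 := by
        have := abs_add_le α (j:ℝ)
        have : |α + (j:ℝ)| ≤ |α| + |(j:ℝ)| := abs_add_le α (j:ℝ)
        have hj : |(j:ℝ)| = (j:ℝ) := abs_of_nonneg (Nat.cast_nonneg j)
        linarith [this, hj.le, hj.ge]
      nlinarith [abs_nonneg (α + (j:ℝ)), Nat.cast_nonneg (α := ℝ) j, abs_nonneg α]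
  -- the power series and its radius
  set p : FormalMultilinearSeries ℂ ℂ ℂ := ofScalars ℂ c with hp
  have hrad : 1 ≤ p.radius := by
    refine ENNReal.le_of_forall_nnreal_lt fun r hr => ?_
    have hr1 : (r : ℝ) < 1 := by exact_mod_cast hr
    apply FormalMultilinearSeries.le_radius_of_summable_norm
    have hsum := D_summable α r.coe_nonneg hr1
    apply Summable.of_nonneg_of_le (fun n => by positivity) ?_ hsum
    intro n
    rw [hp, ofScalars_norm]
    exact mul_le_mul_of_nonneg_right (hcb n) (by positivity)
  have hf : HasFPowerSeriesOnBall p.sum p 0 1 :=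
    (p.hasFPowerSeriesOnBall (lt_of_lt_of_le one_pos hrad)).mono one_pos hrad
  set f : ℂ → ℂ := p.sum with hfdef
  have hmem : ∀ y : ℂ, ‖y‖ < 1 → y ∈ Metric.eball (0 : ℂ) 1 := by
    intro y hy
    rw [Metric.mem_eball, edist_zero_right, enorm_eq_nnnorm]
    have h1 : ‖y‖₊ < 1 := by exact_mod_cast hy
    exact_mod_cast h1
  have hsum : ∀ y : ℂ, ‖y‖ < 1 → HasSum (fun n => c n * y ^ n) (f y) := by
    intro y hy
    have h := hf.hasSum (hmem y hy)
    rw [zero_add] at h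
    simpa only [hp, FormalMultilinearSeries.ofScalars_apply_eq, smul_eq_mul] using h
  -- derivative series
  have hderiv : ∀ y : ℂ, ‖y‖ < 1 →
      HasSum (fun (n : ℕ) => ((n : ℂ) + 1) * c (n + 1) * y ^ ((n + 1 : ℕ))) (deriv f y * y) := by
    intro y hy
    have h := (hf.fderiv).hasSum (hmem y hy)
    rw [zero_add] at h
    have h2 := h.mapL (ContinuousLinearMap.apply ℂ ℂ y)
    simp only [ContinuousLinearMap.apply_apply] at h2
    have h3 : ∀ n : ℕ, (p.derivSeries n (fun _ => y)) y
        = ((n : ℂ) + 1) * c (n + 1) * y ^ ((n + 1 : ℕ)) := by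
      intro n
      rw [p.derivSeries_apply_diag n y]
      rw [show p (n+1) = c (n+1) • ContinuousMultilinearMap.mkPiAlgebraFin ℂ (n+1) ℂ from rfl]
      simp only [ContinuousMultilinearMap.smul_apply,
        ContinuousMultilinearMap.mkPiAlgebraFin_apply, List.prod_ofFn, Finset.prod_const,
        Finset.card_univ, Fintype.card_fin, smul_eq_mul, nsmul_eq_mul]
      push_cast
      ring
    have h4 : (fderiv ℂ f y) y = deriv f y * y := by
      have h5 : (fderiv ℂ f y) y = y * (fderiv ℂ f y) 1 :=
        calc (fderiv ℂ f y) y = (fderiv ℂ f y) (y • 1) := by rw [smul_eq_mul, mul_one]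
          _ = y • (fderiv ℂ f y) 1 := ContinuousLinearMap.map_smul _ _ _
          _ = y * (fderiv ℂ f y) 1 := by rw [smul_eq_mul]
      rw [h5, fderiv_apply_one_eq_deriv]
      ring
    rw [h4] at h2
    exact h2.congr_fun fun n => (h3 n).symm
  -- value at 0
  have hf0 : f 0 = 1 := by
    have h := hsum 0 (by simp)
    have h2 : HasSum (fun n : ℕ => c n * (0:ℂ) ^ n) (c 0 * (0:ℂ) ^ 0) :=
      hasSum_single 0 (fun n hn => by simp [zero_pow hn])
    have h3 := h.unique h2
    rw [h3, hc]
    simp [risingC]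
  have hd0 : deriv f 0 = (α : ℂ) := by
    rw [hf.hasFPowerSeriesAt.deriv]
    rw [show p 1 = c 1 • ContinuousMultilinearMap.mkPiAlgebraFin ℂ 1 ℂ from rfl]
    simp only [ContinuousMultilinearMap.smul_apply,
      ContinuousMultilinearMap.mkPiAlgebraFin_apply, List.prod_ofFn, Finset.prod_const,
      smul_eq_mul]
    rw [hc]
    simp [risingC]
  -- the ODE
  have hODE : ∀ y : ℂ, ‖y‖ < 1 → deriv f y * (1 - y) = (α : ℂ) * f y := by
    intro y hy
    rcases eq_or_ne y 0 with rfl | hy0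
    · rw [hd0, hf0]
      ring
    · have hA := hderiv y hy
      have hFy := (hsum y hy).mul_right y
      have hB : HasSum (fun n : ℕ => (n:ℂ) * c n * y ^ n * y)
          (deriv f y * y * y + ∑ i ∈ Finset.range 1, (i:ℂ) * c i * y ^ i * y) := by
        refine (hasSum_nat_add_iff (f := fun n : ℕ => (n:ℂ) * c n * y ^ n * y) 1).mp ?_
        refine (hA.mul_right y).congr_fun fun n => ?_
        push_cast
        ring
      simp only [Finset.range_one, Finset.sum_singleton, Nat.cast_zero, zero_mul, add_zero]
        at hB
      have hA' := (hFy.mul_left (α : ℂ)).add hB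
      have huniq : deriv f y * y = (α:ℂ) * (f y * y) + deriv f y * y * y := by
        refine hA.unique (hA'.congr_fun fun n => ?_)
        have hr := hrec n
        calc ((n:ℂ) + 1) * c (n + 1) * y ^ ((n + 1 : ℕ))
            = ((n:ℂ) + 1) * c (n + 1) * (y ^ n * y) := by rw [pow_succ]
          _ = ((α:ℂ) + n) * c n * (y ^ n * y) := by rw [hr]
          _ = (α:ℂ) * (c n * y ^ n * y) + (n:ℂ) * c n * y ^ n * y := by ring
      have hcancel : (deriv f y * (1 - y)) * y = ((α:ℂ) * f y) * y := by
        linear_combination huniq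
      exact mul_right_cancel₀ hy0 hcancel
  -- constancy of g = f * (1 - ·)^α on the ball
  set s : Set ℂ := Metric.ball (0:ℂ) 1 with hsdef
  have hmem' : ∀ y : ℂ, y ∈ s ↔ ‖y‖ < 1 := by
    intro y
    rw [hsdef, Metric.mem_ball, dist_zero_right]
  set g : ℂ → ℂ := fun w => f w * (1 - w) ^ (α : ℂ) with hg
  have hslit : ∀ y : ℂ, ‖y‖ < 1 → (1 - y) ∈ Complex.slitPlane := by
    intro y hy
    left
    have h1 : |y.re| ≤ ‖y‖ := Complex.abs_re_le_norm y
    have : (1 - y).re = 1 - y.re := by simp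
    rw [this]
    cases' abs_le.mp h1 with h2 h3
    linarith
  have hgderiv : ∀ y ∈ s, HasDerivAt g 0 y := by
    intro y hys
    have hy : ‖y‖ < 1 := (hmem' y).mp hys
    have hfd : HasDerivAt f (deriv f y) y :=
      ((hf.analyticAt_of_mem (hmem y hy)).differentiableAt).hasDerivAt
    have hbase : HasDerivAt (fun w : ℂ => 1 - w) (-1 : ℂ) y := by
      simpa using (hasDerivAt_id y).const_sub (1 : ℂ)
    have hcd : HasDerivAt (fun w : ℂ => (1 - w) ^ (α : ℂ))
        ((α : ℂ) * (1 - y) ^ ((α : ℂ) - 1) * (-1)) y :=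
      HasDerivAt.cpow_const hbase (hslit y hy)
    have hmul := hfd.mul hcd
    have h1y : (1 : ℂ) - y ≠ 0 := Complex.slitPlane_ne_zero (hslit y hy)
    have hsplit : (1 - y) ^ (α : ℂ) = (1 - y) ^ ((α : ℂ) - 1) * (1 - y) := by
      conv_lhs => rw [show (α:ℂ) = ((α:ℂ) - 1) + 1 by ring]
      rw [Complex.cpow_add _ _ h1y, Complex.cpow_one]
    have hzero : deriv f y * (1 - y) ^ (α : ℂ) +
        f y * ((α : ℂ) * (1 - y) ^ ((α : ℂ) - 1) * (-1)) = 0 := by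
      linear_combination deriv f y * hsplit + (1 - y) ^ ((α : ℂ) - 1) * hODE y hy
    rw [hg]
    rw [← hzero]
    exact hmul
  have hgdiff : DifferentiableOn ℂ g s :=
    fun y hy => ((hgderiv y hy).differentiableAt).differentiableWithinAt
  have hgz : ∀ y ∈ s, fderivWithin ℂ g s y = 0 := by
    intro y hy
    rw [fderivWithin_of_isOpen Metric.isOpen_ball hy,
      ((hgderiv y hy).hasFDerivAt).fderiv]
    ext w
    simp
  have hzs : z ∈ s := (hmem' z).mpr hz
  have h0s : (0:ℂ) ∈ s := (hmem' 0).mpr (by simp)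
  have hconst : g z = g 0 :=
    Convex.is_const_of_fderivWithin_eq_zero (convex_ball 0 1) hgdiff hgz hzs h0s
  have hg0 : g 0 = 1 := by
    rw [hg]
    simp [hf0, Complex.one_cpow]
  have hfz : f z * (1 - z) ^ (α : ℂ) = 1 := by
    have h := hconst.trans hg0
    rw [hg] at h
    exact h
  have hfinal : f z = (1 - z) ^ (-(α : ℂ)) := by
    rw [Complex.cpow_neg]
    exact eq_inv_of_mul_eq_one_left (by linear_combination hfz)
  calc (∑' n : ℕ, risingC (α : ℂ) n / (n.factorial : ℂ) * z ^ n)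
      = ∑' n : ℕ, c n * z ^ n := by rw [hc]
    _ = f z := (hsum z hz).tsum_eq
    _ = (1 - z) ^ (-(α : ℂ)) := hfinal

/-- Limit of the q-binomial theorem as q → 1⁻ over q ∈ (0,1). -/
theorem stmt_6 (α : ℝ) (z : ℂ) (hz : ‖z‖ < 1) :
    Filter.Tendsto
      (fun q : ℝ => ∑' n : ℕ, qPoch ((q ^ α : ℝ) : ℂ) (q : ℂ) n / qPoch (q : ℂ) (q : ℂ) n * z ^ n)
      (nhdsWithin 1 (Set.Ioo (0 : ℝ) 1))
      (nhds (∑' n : ℕ, risingC (α : ℂ) n / (n.factorial : ℂ) * z ^ n)) ∧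
    (∑' n : ℕ, risingC (α : ℂ) n / (n.factorial : ℂ) * z ^ n) = (1 - z) ^ (-(α : ℂ)) := by
  exact ⟨part1 α z hz, part2 α z hz⟩
end
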